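/- For x ∈ ℝ³ with ‖x‖ < π, the right Jacobian of SO(3) is invertible; explicitly det J_r(x) = 2(1 - cos‖x‖)/‖x‖² > 0 for 0 < ‖x‖ < π, and det J_r(0) = 1. -/

import Mathlib

open Matrix
open scoped Nat

/-- The hat map `x^∧` for `so(3)`. -/
def hat (x : Fin 3 → ℝ) : Matrix (Fin 3) (Fin 3) ℝ :=
  !![0, -x 2, x 1; x 2, 0, -x 0; -x 1, x 0, 0]

/-- Right Jacobian of `SO(3)`: `J_r(x) = Σ_{k≥0} (-x^∧)^k/(k+1)!`. -/
noncomputable def Jr (x : Fin 3 → ℝ) : Matrix (Fin 3) (Fin 3) ℝ :=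
  ∑' k : ℕ, (((k + 1)! : ℝ))⁻¹ • (-(hat x)) ^ k

lemma hat_sq (x : Fin 3 → ℝ) : hat x * hat x =
    !![-(x 1 ^ 2 + x 2 ^ 2), x 0 * x 1, x 0 * x 2;
       x 0 * x 1, -(x 0 ^ 2 + x 2 ^ 2), x 1 * x 2;
       x 0 * x 2, x 1 * x 2, -(x 0 ^ 2 + x 1 ^ 2)] := by
  simp [hat, Matrix.mul_fin_three]
  constructorm* _ ∧ _ <;> ring
lemma hat_cube (x : Fin 3 → ℝ) :
    hat x * (hat x * hat x) = -((x 0 ^ 2 + x 1 ^ 2 + x 2 ^ 2) • hat x) := by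
  rw [hat_sq]
  simp [hat, Matrix.mul_fin_three, Matrix.smul_of]
  constructorm* _ ∧ _ <;> ring
lemma hat_pow_odd (x : Fin 3 → ℝ) (m : ℕ) :
    hat x ^ (2 * m + 1) = (-(x 0 ^ 2 + x 1 ^ 2 + x 2 ^ 2)) ^ m • hat x := by
  induction m with
  | zero => simp
  | succ m ih =>
    have : 2 * (m + 1) + 1 = (2 * m + 1) + 2 := by ring
    rw [this, pow_add, ih, smul_mul_assoc, pow_two (hat x), hat_cube, pow_succ]
    rw [← neg_smul, smul_smul]
    congr 1
lemma hat_pow_even (x : Fin 3 → ℝ) (m : ℕ) :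
    hat x ^ (2 * m + 2) = (-(x 0 ^ 2 + x 1 ^ 2 + x 2 ^ 2)) ^ m • (hat x * hat x) := by
  have : 2 * m + 2 = (2 * m + 1) + 1 := by ring
  rw [this, pow_succ, hat_pow_odd, smul_mul_assoc]
lemma summable_aux (r : ℝ) (c : ℕ) : Summable (fun m : ℕ => (-r) ^ m / (2 * m + c)!) := by
  apply Summable.of_abs
  refine Summable.of_nonneg_of_le (fun m => abs_nonneg _) (fun m => ?_)
    (Real.summable_pow_div_factorial |r|)
  rw [abs_div, abs_pow, abs_neg, abs_of_nonneg (by positivity : (0:ℝ) ≤ ((2*m+c)! : ℝ))]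
  apply div_le_div_of_nonneg_left (by positivity) (by positivity)
  exact_mod_cast Nat.factorial_le (by omega)
lemma jr_eq (x : Fin 3 → ℝ) {c1 c2 : ℝ}
    (h1 : HasSum (fun m : ℕ => (-(x 0 ^ 2 + x 1 ^ 2 + x 2 ^ 2)) ^ m / (2 * m + 2)!) c1)
    (h2 : HasSum (fun m : ℕ => (-(x 0 ^ 2 + x 1 ^ 2 + x 2 ^ 2)) ^ m / (2 * m + 3)!) c2) :
    Jr x = (1 : Matrix (Fin 3) (Fin 3) ℝ) + (-c1) • hat x + c2 • (hat x * hat x) := by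
  have hodd : HasSum (fun m : ℕ => (((2 * m + 1) + 1)! : ℝ)⁻¹ • (-(hat x)) ^ (2 * m + 1))
      ((-c1) • hat x) := by
    have key : ∀ m : ℕ, (((2 * m + 1) + 1)! : ℝ)⁻¹ • (-(hat x)) ^ (2 * m + 1)
        = -(((-(x 0 ^ 2 + x 1 ^ 2 + x 2 ^ 2)) ^ m / (2 * m + 2)!) • hat x) := by
      intro m
      rw [Odd.neg_pow ⟨m, by ring⟩, hat_pow_odd, smul_neg, smul_smul]
      congr 1
      congr 1
      rw [div_eq_inv_mul]
    rw [neg_smul]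
    exact HasSum.congr_fun (h1.smul_const (hat x)).neg (fun m => key m)
  have heven : HasSum (fun m : ℕ => ((2 * m + 1)! : ℝ)⁻¹ • (-(hat x)) ^ (2 * m))
      (c2 • (hat x * hat x) + 1) := by
    have key : ∀ m : ℕ, ((2 * (m + 1) + 1)! : ℝ)⁻¹ • (-(hat x)) ^ (2 * (m + 1))
        = ((-(x 0 ^ 2 + x 1 ^ 2 + x 2 ^ 2)) ^ m / (2 * m + 3)!) • (hat x * hat x) := by
      intro m
      rw [Even.neg_pow ⟨m + 1, by ring⟩, show 2 * (m + 1) = 2 * m + 2 from by ring,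
        hat_pow_even, smul_smul]
      congr 1
      rw [div_eq_inv_mul]
    have h := (hasSum_nat_add_iff (f := fun m : ℕ => ((2 * m + 1)! : ℝ)⁻¹ • (-(hat x)) ^ (2 * m)) 1).mp
      (HasSum.congr_fun (h2.smul_const (hat x * hat x)) (fun m => key m))
    simpa using h
  have htot : HasSum (fun k : ℕ => (((k + 1)! : ℝ))⁻¹ • (-(hat x)) ^ k)
      ((c2 • (hat x * hat x) + 1) + (-c1) • hat x) :=
    HasSum.even_add_odd heven hodd
  rw [Jr, htot.tsum_eq]
  abel
lemma det_aux (x : Fin 3 → ℝ) (a b : ℝ) :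
    ((1 : Matrix (Fin 3) (Fin 3) ℝ) + a • hat x + b • (hat x * hat x)).det
      = (1 - b * (x 0 ^ 2 + x 1 ^ 2 + x 2 ^ 2)) ^ 2
        + a ^ 2 * (x 0 ^ 2 + x 1 ^ 2 + x 2 ^ 2) := by
  rw [hat_sq, Matrix.det_fin_three]
  simp [hat, Matrix.add_apply, Matrix.smul_apply, Matrix.one_apply, smul_eq_mul]
  ring
lemma hasSum_c1 (θ : ℝ) (hθ : 0 < θ) :
    HasSum (fun m : ℕ => (-(θ ^ 2)) ^ m / (2 * m + 2)!) ((1 - Real.cos θ) / θ ^ 2) := by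
  have h1 : HasSum (fun n : ℕ => (-1 : ℝ) ^ (n + 1) * θ ^ (2 * (n + 1)) / (2 * (n + 1))!)
      (Real.cos θ - 1) := by
    apply (hasSum_nat_add_iff (f := fun n : ℕ => (-1 : ℝ) ^ n * θ ^ (2 * n) / (2 * n)!) 1).mpr
    simpa using Real.hasSum_cos θ
  have h2 := (h1.div_const (θ ^ 2)).neg
  rw [← neg_div, neg_sub] at h2
  refine HasSum.congr_fun h2 (fun m => ?_)
  have he : (2 * (m + 1) : ℕ) = 2 * m + 2 := by ring
  rw [he]
  field_simp
  ring
lemma hasSum_c2 (θ : ℝ) (hθ : 0 < θ) :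
    HasSum (fun m : ℕ => (-(θ ^ 2)) ^ m / (2 * m + 3)!) ((θ - Real.sin θ) / θ ^ 3) := by
  have h1 : HasSum (fun n : ℕ => (-1 : ℝ) ^ (n + 1) * θ ^ (2 * (n + 1) + 1) / (2 * (n + 1) + 1)!)
      (Real.sin θ - θ) := by
    apply (hasSum_nat_add_iff
      (f := fun n : ℕ => (-1 : ℝ) ^ n * θ ^ (2 * n + 1) / (2 * n + 1)!) 1).mpr
    simpa using Real.hasSum_sin θ
  have h2 := (h1.div_const (θ ^ 3)).neg
  rw [← neg_div, neg_sub] at h2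
  refine HasSum.congr_fun h2 (fun m => ?_)
  have he : (2 * (m + 1) + 1 : ℕ) = 2 * m + 3 := by ring
  rw [he]
  field_simp
  ring

/-- For `x ∈ ℝ³` with `‖x‖ < π`, the right Jacobian of `SO(3)` is invertible; explicitly
`det J_r(x) = 2(1 - cos ‖x‖)/‖x‖²` for `0 < ‖x‖ < π`, and `det J_r(0) = 1`. -/
theorem jr_so3_invertible (x : Fin 3 → ℝ)
    (hx : Real.sqrt (x 0 ^ 2 + x 1 ^ 2 + x 2 ^ 2) < Real.pi) :
    IsUnit (Jr x) ∧
      (0 < Real.sqrt (x 0 ^ 2 + x 1 ^ 2 + x 2 ^ 2) →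
        (Jr x).det =
          2 * (1 - Real.cos (Real.sqrt (x 0 ^ 2 + x 1 ^ 2 + x 2 ^ 2))) /
            Real.sqrt (x 0 ^ 2 + x 1 ^ 2 + x 2 ^ 2) ^ 2) ∧
      (x = 0 → (Jr x).det = 1) := by
  have hr0 : (0 : ℝ) ≤ x 0 ^ 2 + x 1 ^ 2 + x 2 ^ 2 := by positivity
  set r := x 0 ^ 2 + x 1 ^ 2 + x 2 ^ 2 with hrdef
  set θ := Real.sqrt r with hθdef
  have hθ2 : θ ^ 2 = r := Real.sq_sqrt hr0
  by_cases h0 : r = 0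
  · have hdet : (Jr x).det = 1 := by
      rw [jr_eq x (summable_aux r 2).hasSum (summable_aux r 3).hasSum,
        det_aux, ← hrdef, h0]
      ring
    refine ⟨?_, ?_, fun _ => hdet⟩
    · rw [Matrix.isUnit_iff_isUnit_det, hdet]; exact isUnit_one
    · intro hpos
      rw [hθdef, h0, Real.sqrt_zero] at hpos
      exact absurd hpos (lt_irrefl 0)
  · have hrpos : 0 < r := lt_of_le_of_ne hr0 (Ne.symm h0)
    have hθpos : 0 < θ := Real.sqrt_pos.mpr hrpos
    have hc1 : HasSum (fun m : ℕ => (-r) ^ m / (2 * m + 2)!) ((1 - Real.cos θ) / θ ^ 2) := by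
      rw [← hθ2]; exact hasSum_c1 θ hθpos
    have hc2 : HasSum (fun m : ℕ => (-r) ^ m / (2 * m + 3)!) ((θ - Real.sin θ) / θ ^ 3) := by
      rw [← hθ2]; exact hasSum_c2 θ hθpos
    have hdet : (Jr x).det = 2 * (1 - Real.cos θ) / θ ^ 2 := by
      rw [jr_eq x hc1 hc2, det_aux, ← hrdef, ← hθ2]
      have hs := Real.sin_sq_add_cos_sq θ
      field_simp
      linear_combination hs
    have hcos : Real.cos θ < 1 := by
      have hsin : 0 < Real.sin θ := Real.sin_pos_of_pos_of_lt_pi hθpos hx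
      nlinarith [Real.sin_sq_add_cos_sq θ, Real.cos_le_one θ]
    refine ⟨?_, fun _ => hdet, ?_⟩
    · rw [Matrix.isUnit_iff_isUnit_det, hdet, isUnit_iff_ne_zero]
      have : 0 < 2 * (1 - Real.cos θ) / θ ^ 2 :=
        div_pos (by linarith) (by positivity)
      exact ne_of_gt this
    · intro hx0
      exfalso
      apply h0
      rw [hrdef, hx0]
      simp
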